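/- Let Φ : ℕ → ℝ satisfy Φ(0)=1, Φ(1)=6, Φ(n)=6Φ(n−1)−4Φ(n−2), and let IDF : ℕ → ℝ be given by IDF(n) = −4 + ((50+22√5)/25)(3−√5)^n + ((13−3√5)/10)n(3−√5)^n + ((50−22√5)/25)(3+√5)^n + ((13+3√5)/10)n(3+√5)^n. Then lim_{n→∞} IDF(n)/(n·Φ(n)) = (−5 + 6√5)/5. -/

import Mathlib

open Filter Real

set_option maxHeartbeats 1600000 in
theorem stmt_7 (Φ IDF : ℕ → ℝ)
    (hΦ0 : Φ 0 = 1) (hΦ1 : Φ 1 = 6)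
    (hΦ : ∀ n, 2 ≤ n → Φ n = 6 * Φ (n - 1) - 4 * Φ (n - 2))
    (hIDF : ∀ n : ℕ, IDF n = -4
      + (50 + 22 * Real.sqrt 5) / 25 * (3 - Real.sqrt 5) ^ n
      + (13 - 3 * Real.sqrt 5) / 10 * n * (3 - Real.sqrt 5) ^ n
      + (50 - 22 * Real.sqrt 5) / 25 * (3 + Real.sqrt 5) ^ n
      + (13 + 3 * Real.sqrt 5) / 10 * n * (3 + Real.sqrt 5) ^ n) :
    Filter.Tendsto (fun n : ℕ => IDF n / (n * Φ n)) Filter.atTop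
      (nhds ((-5 + 6 * Real.sqrt 5) / 5)) := by
  set s := Real.sqrt 5 with hsdef
  have hs2 : s ^ 2 = 5 := Real.sq_sqrt (by norm_num)
  have hs0 : 0 ≤ s := Real.sqrt_nonneg 5
  have hsgt : (2:ℝ) < s := by nlinarith
  have hslt : s < 3 := by nlinarith
  set α : ℝ := 3 + s with hαdef
  set β : ℝ := 3 - s with hβdef
  have hαpos : 0 < α := by simp only [hαdef]; linarith
  have hβpos : 0 < β := by simp only [hβdef]; linarith
  have hβα : β < α := by simp only [hαdef, hβdef]; linarith
  set A : ℝ := (5 + 3*s)/10 with hAdef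
  set B : ℝ := (5 - 3*s)/10 with hBdef
  have hApos : 0 < A := by simp only [hAdef]; linarith
  -- closed form for Φ
  have hclosed : ∀ n, Φ n = A * α ^ n + B * β ^ n := by
    have key : ∀ n, Φ n = A * α ^ n + B * β ^ n ∧
        Φ (n+1) = A * α ^ (n+1) + B * β ^ (n+1) := by
      intro n
      induction n with
      | zero =>
        constructor
        · simp only [pow_zero, hΦ0, hAdef, hBdef]; ring
        · simp only [pow_one, hΦ1, hAdef, hBdef, hαdef, hβdef]
          linear_combination (-3/5 : ℝ) * hs2
      | succ k ih =>
        refine ⟨ih.2, ?_⟩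
        have h1 : Φ (k+2) = 6 * Φ (k+1) - 4 * Φ k := by
          have := hΦ (k+2) (by omega)
          simpa using this
        rw [h1, ih.1, ih.2]
        have hα2 : α ^ 2 = 6 * α - 4 := by
          simp only [hαdef]; nlinarith
        have hβ2 : β ^ 2 = 6 * β - 4 := by
          simp only [hβdef]; nlinarith
        have e1 : α ^ (k+1+1) = α ^ k * α ^ 2 := by ring
        have e2 : β ^ (k+1+1) = β ^ k * β ^ 2 := by ring
        rw [e1, e2, hα2, hβ2]
        ring
    exact fun n => (key n).1
  have hpow_le : ∀ n : ℕ, β ^ n ≤ α ^ n :=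
    fun n => pow_le_pow_left₀ hβpos.le hβα.le n
  have hden_pos : ∀ n : ℕ, 0 < A * α ^ n + B * β ^ n := by
    intro n
    have h1 := pow_pos hβpos n
    have h2 := hpow_le n
    have hAB : A + B = 1 := by simp only [hAdef, hBdef]; ring
    nlinarith
  -- the auxiliary function
  set r : ℝ := β / α with hrdef
  have hr0 : 0 ≤ r := div_nonneg hβpos.le hαpos.le
  have hr1 : r < 1 := (div_lt_one hαpos).mpr hβα
  have hα1 : 1 < α := by simp only [hαdef]; linarith
  have hαinv0 : 0 ≤ α⁻¹ := inv_nonneg.mpr hαpos.le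
  have hαinv1 : α⁻¹ < 1 := inv_lt_one_of_one_lt₀ hα1
  set g : ℕ → ℝ := fun n =>
    (-4 * (α⁻¹) ^ n * (n:ℝ)⁻¹ + (50 + 22*s)/25 * r ^ n * (n:ℝ)⁻¹
      + (13 - 3*s)/10 * r ^ n + (50 - 22*s)/25 * (n:ℝ)⁻¹ + (13 + 3*s)/10)
      / (A + B * r ^ n) with hgdef
  have hninv : Tendsto (fun n : ℕ => (n:ℝ)⁻¹) atTop (nhds 0) :=
    tendsto_inv_atTop_nhds_zero_nat
  have hrpow : Tendsto (fun n : ℕ => r ^ n) atTop (nhds 0) :=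
    tendsto_pow_atTop_nhds_zero_of_lt_one hr0 hr1
  have hαpow : Tendsto (fun n : ℕ => (α⁻¹) ^ n) atTop (nhds 0) :=
    tendsto_pow_atTop_nhds_zero_of_lt_one hαinv0 hαinv1
  have hgnum : Tendsto (fun n : ℕ =>
      -4 * (α⁻¹) ^ n * (n:ℝ)⁻¹ + (50 + 22*s)/25 * r ^ n * (n:ℝ)⁻¹
      + (13 - 3*s)/10 * r ^ n + (50 - 22*s)/25 * (n:ℝ)⁻¹ + (13 + 3*s)/10)
      atTop (nhds (-4 * 0 * 0 + (50 + 22*s)/25 * 0 * 0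
      + (13 - 3*s)/10 * 0 + (50 - 22*s)/25 * 0 + (13 + 3*s)/10)) := by
    exact ((((((tendsto_const_nhds.mul hαpow).mul hninv).add
      (((tendsto_const_nhds.mul hrpow)).mul hninv)).add
      (tendsto_const_nhds.mul hrpow)).add
      (tendsto_const_nhds.mul hninv)).add tendsto_const_nhds)
  have hgden : Tendsto (fun n : ℕ => A + B * r ^ n) atTop (nhds (A + B * 0)) :=
    tendsto_const_nhds.add (tendsto_const_nhds.mul hrpow)
  have hA0 : A + B * 0 ≠ 0 := by simpa using hApos.ne'
  have hg : Tendsto g atTop (nhds ((-5 + 6*s)/5)) := by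
    have := hgnum.div hgden hA0
    convert this using 2
    · rfl
    have h5 : (5:ℝ) + 3*s ≠ 0 := by positivity
    simp only [hAdef, mul_zero, zero_mul, add_zero, zero_add]
    rw [div_div_div_cancel_right₀ (by norm_num : (10:ℝ) ≠ 0), div_eq_div_iff (by norm_num) h5]
    linear_combination (18 : ℝ) * hs2
  refine hg.congr' ?_
  filter_upwards [eventually_ge_atTop 1] with n hn
  have hn0 : (n:ℝ) ≠ 0 := Nat.cast_ne_zero.mpr (by omega)
  have hαn : α ^ n ≠ 0 := (pow_pos hαpos n).ne'
  have hden : A * α ^ n + B * β ^ n ≠ 0 := (hden_pos n).ne'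
  have hden2 : A + B * (β ^ n / α ^ n) ≠ 0 := by
    have h : A + B * (β ^ n / α ^ n) = (A * α ^ n + B * β ^ n) / α ^ n := by
      field_simp
    rw [h]
    exact div_ne_zero hden hαn
  simp only [hgdef, hrdef, div_pow, inv_pow]
  rw [hIDF n, hclosed n]
  rw [div_eq_div_iff hden2 (mul_ne_zero hn0 hden)]
  field_simp
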